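/- The function F_δ(z) = z·exp(B̃_δ(z)), where B̃_δ(z) = Σ_{n≥1} ((-1)^{n-1} sin(nδ)/(n² sin δ)) zⁿ and π/2 ≤ δ < π, has logarithmic coefficients γ_n(F_δ) = (-1)^{n-1} sin(nδ)/(2n² sin δ), and these satisfy Σ_{n=1}^∞ |γ_n|² = (1/(16 sin² δ))(π⁴/45 - Li₄(e^{-2iδ}) - Li₄(e^{2iδ})). -/

import Mathlib

open Complex Metric

/-- The polylogarithm of order 4, `Li₄(z) = Σ_{n≥1} zⁿ/n⁴`. -/
noncomputable def Li4 (z : ℂ) : ℂ := ∑' n : ℕ, z ^ (n + 1) / ((n : ℂ) + 1) ^ 4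

/-- `B̃_δ(z) = Σ_{n≥1} ((-1)^{n-1} sin(nδ)/(n² sin δ)) zⁿ`. -/
noncomputable def Btilde (δ : ℝ) (z : ℂ) : ℂ :=
  ∑' n : ℕ,
    (((-1 : ℝ) ^ n * Real.sin ((n + 1) * δ) / (((n : ℝ) + 1) ^ 2 * Real.sin δ) : ℝ) : ℂ) *
      z ^ (n + 1)

private lemma abs_sin_nat_mul_le (n : ℕ) (x : ℝ) :
    |Real.sin (n * x)| ≤ n * |Real.sin x| := by
  induction n with
  | zero => simp
  | succ n ih =>
    have h : ((n + 1 : ℕ) : ℝ) * x = n * x + x := by push_cast; ring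
    rw [h, Real.sin_add]
    calc |Real.sin (n*x) * Real.cos x + Real.cos (n*x) * Real.sin x|
        ≤ |Real.sin (n*x) * Real.cos x| + |Real.cos (n*x) * Real.sin x| := abs_add_le _ _
      _ ≤ |Real.sin (n*x)| * 1 + 1 * |Real.sin x| := by
          rw [abs_mul, abs_mul]
          gcongr
          · exact Real.abs_cos_le_one x
          · exact Real.abs_cos_le_one _
      _ ≤ (n : ℝ) * |Real.sin x| + |Real.sin x| := by
          rw [mul_one, one_mul]
          exact add_le_add ih le_rfl
      _ = ((n + 1 : ℕ) : ℝ) * |Real.sin x| := by push_cast; ring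

private lemma hasSum_zeta4' :
    HasSum (fun n : ℕ => 1 / ((n : ℝ) + 1) ^ 4) (Real.pi ^ 4 / 90) := by
  have h : HasSum (fun n : ℕ => (1 : ℝ) / (n : ℝ) ^ 4)
      (Real.pi ^ 4 / 90 + ∑ i ∈ Finset.range 1, (1 : ℝ) / (i : ℝ) ^ 4) := by
    simpa using hasSum_zeta_four
  have h2 := (hasSum_nat_add_iff (f := fun n : ℕ => (1:ℝ) / (n:ℝ)^4) 1).mpr h
  have : (fun n : ℕ => (1:ℝ) / ((n + 1 : ℕ) : ℝ) ^ 4) = fun n : ℕ => 1 / ((n : ℝ) + 1) ^ 4 := by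
    funext n; push_cast; ring
  rwa [this] at h2

private lemma hasSum_Li4_unit (z : ℂ) (hz : ‖z‖ ≤ 1) :
    HasSum (fun n : ℕ => z ^ (n + 1) / ((n : ℂ) + 1) ^ 4) (Li4 z) := by
  have hsum : Summable (fun n : ℕ => z ^ (n + 1) / ((n : ℂ) + 1) ^ 4) := by
    refine Summable.of_norm_bounded hasSum_zeta4'.summable fun n => ?_
    have hc : ((n : ℂ) + 1) = (((n : ℝ) + 1 : ℝ) : ℂ) := by push_cast; ring
    rw [norm_div, norm_pow, hc, norm_pow, Complex.norm_real,
      Real.norm_of_nonneg (by positivity)]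
    gcongr
    exact pow_le_one₀ (norm_nonneg z) hz
  exact hsum.hasSum

private lemma hasSum_cos_div (θ : ℝ) :
    HasSum (fun n : ℕ => Real.cos (((n : ℝ) + 1) * θ) / ((n : ℝ) + 1) ^ 4)
      ((Li4 (Complex.exp (θ * Complex.I))).re) := by
  have hnorm : ‖Complex.exp (θ * Complex.I)‖ ≤ 1 := by
    rw [Complex.norm_exp_ofReal_mul_I]
  have h := Complex.hasSum_re (hasSum_Li4_unit (Complex.exp (θ * Complex.I)) hnorm)
  have heq : (fun n : ℕ => Real.cos (((n : ℝ) + 1) * θ) / ((n : ℝ) + 1) ^ 4)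
      = fun n : ℕ => ((Complex.exp (θ * Complex.I) ^ (n + 1) / ((n : ℂ) + 1) ^ 4).re) := by
    funext n
    have h1 : Complex.exp (θ * Complex.I) ^ (n + 1)
        = Complex.exp ((((n : ℝ) + 1) * θ : ℝ) * Complex.I) := by
      rw [← Complex.exp_nat_mul]; congr 1; push_cast; ring
    have h2 : ((n : ℂ) + 1) ^ 4 = ((((n : ℝ) + 1) ^ 4 : ℝ) : ℂ) := by push_cast; ring
    rw [h1, h2, Complex.div_ofReal_re, Complex.exp_ofReal_mul_I_re]
  rw [heq]; exact h

theorem logCoeff_extremal_M_delta (δ : ℝ) (hδ1 : Real.pi / 2 ≤ δ) (hδ2 : δ < Real.pi)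
    (γ : ℕ → ℂ)
    (hγ : ∀ z ∈ ball (0 : ℂ) 1, z ≠ 0 →
      HasSum (fun n : ℕ => 2 * γ (n + 1) * z ^ (n + 1))
        (Complex.log ((z * Complex.exp (Btilde δ z)) / z))) :
    (∀ n : ℕ, 1 ≤ n →
      γ n = (((-1 : ℝ) ^ (n - 1) * Real.sin (n * δ) / (2 * (n : ℝ) ^ 2 * Real.sin δ) : ℝ) : ℂ)) ∧
    HasSum (fun n : ℕ => ‖γ (n + 1)‖ ^ 2)
      (((1 / (16 * (Real.sin δ : ℂ) ^ 2)) *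
        ((Real.pi : ℂ) ^ 4 / 45 -
          Li4 (Complex.exp (-2 * Complex.I * δ)) -
          Li4 (Complex.exp (2 * Complex.I * δ)))).re) := by
  have hδ0 : 0 < δ := lt_of_lt_of_le (by positivity) hδ1
  have hs : 0 < Real.sin δ := Real.sin_pos_of_pos_of_lt_pi hδ0 hδ2
  set a : ℕ → ℝ :=
    fun n => (-1 : ℝ) ^ n * Real.sin (((n : ℝ) + 1) * δ) / (((n : ℝ) + 1) ^ 2 * Real.sin δ)
    with ha_def
  have hsinb : ∀ n : ℕ, |Real.sin (((n : ℝ) + 1) * δ)| ≤ ((n : ℝ) + 1) * Real.sin δ := by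
    intro n
    have h := abs_sin_nat_mul_le (n + 1) δ
    rw [abs_of_pos hs] at h
    have hc : ((n + 1 : ℕ) : ℝ) = (n : ℝ) + 1 := by push_cast; ring
    rwa [hc] at h
  have habs : ∀ n : ℕ, |a n| ≤ 1 := by
    intro n
    have hd : (0 : ℝ) < ((n : ℝ) + 1) ^ 2 * Real.sin δ := by positivity
    rw [ha_def]
    rw [abs_div, div_le_one (by rwa [abs_of_pos hd]), abs_of_pos hd, abs_mul, _root_.abs_pow,
      abs_neg, abs_one, one_pow, one_mul]
    calc |Real.sin (((n : ℝ) + 1) * δ)| ≤ ((n : ℝ) + 1) * Real.sin δ := hsinb n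
      _ ≤ ((n : ℝ) + 1) ^ 2 * Real.sin δ := by
          have h1 : (0 : ℝ) ≤ (n : ℝ) := Nat.cast_nonneg n
          nlinarith
  have hBsum : ∀ z : ℂ, ‖z‖ < 1 →
      HasSum (fun n : ℕ => ((a n : ℝ) : ℂ) * z ^ (n + 1)) (Btilde δ z) := by
    intro z hz
    have hsum : Summable (fun n : ℕ => ((a n : ℝ) : ℂ) * z ^ (n + 1)) := by
      refine Summable.of_norm_bounded (g := fun n => ‖z‖ ^ (n + 1)) ?_ fun n => ?_
      · refine ((summable_geometric_of_lt_one (norm_nonneg z) hz).mul_left ‖z‖).congr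
          fun n => ?_
        rw [pow_succ, mul_comm]
      · rw [norm_mul, norm_pow, Complex.norm_real]
        exact mul_le_of_le_one_left (pow_nonneg (norm_nonneg z) _)
          ((Real.norm_eq_abs _).le.trans (habs n))
    exact hsum.hasSum
  have hBnorm : ∀ z : ℂ, ‖z‖ ≤ 1 / 2 → ‖Btilde δ z‖ ≤ 1 := by
    intro z hz
    have hg : HasSum (fun n : ℕ => ((1 : ℝ) / 2) ^ (n + 1)) 1 := by
      have h2 := hasSum_geometric_two.mul_left (1 / 2 : ℝ)
      rw [show (1 / 2 : ℝ) * 2 = 1 by norm_num] at h2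
      have hfun : (fun n : ℕ => ((1 : ℝ) / 2) ^ (n + 1))
          = fun n : ℕ => (1 / 2 : ℝ) * (1 / 2) ^ n := by
        funext n; rw [pow_succ, mul_comm]
      rw [hfun]; exact h2
    have hb : ∀ n : ℕ, ‖((a n : ℝ) : ℂ) * z ^ (n + 1)‖ ≤ ((1 : ℝ) / 2) ^ (n + 1) := by
      intro n
      rw [norm_mul, norm_pow, Complex.norm_real]
      calc ‖a n‖ * ‖z‖ ^ (n + 1) ≤ 1 * (1 / 2 : ℝ) ^ (n + 1) :=
            mul_le_mul ((Real.norm_eq_abs _).le.trans (habs n))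
              (pow_le_pow_left₀ (norm_nonneg z) hz _)
              (by positivity) one_pos.le
        _ = ((1 : ℝ) / 2) ^ (n + 1) := one_mul _
    exact tsum_of_norm_bounded hg hb
  have hlog : ∀ z : ℂ, ‖z‖ < 1 / 2 → z ≠ 0 →
      HasSum (fun n : ℕ => 2 * γ (n + 1) * z ^ (n + 1)) (Btilde δ z) := by
    intro z hz hz0
    have hmem : z ∈ ball (0 : ℂ) 1 := by
      simp only [mem_ball, dist_zero_right]
      linarith
    have h := hγ z hmem hz0
    have hB1 : ‖Btilde δ z‖ ≤ 1 := hBnorm z hz.le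
    have him : |(Btilde δ z).im| ≤ 1 := by
      have := Complex.abs_im_le_norm (Btilde δ z)
      linarith
    have hpi := Real.pi_gt_three
    rwa [mul_div_cancel_left₀ _ hz0, Complex.log_exp
      (by linarith [neg_abs_le (Btilde δ z).im])
      (by linarith [le_abs_self (Btilde δ z).im])] at h
  -- coefficient identification via power series uniqueness
  set c : ℕ → ℂ := fun n => if n = 0 then 0 else 2 * γ n with hc_def
  set b : ℕ → ℂ := fun n => if n = 0 then 0 else ((a (n - 1) : ℝ) : ℂ) with hb_def
  have hcoeff : ∀ (d : ℕ → ℂ) (n : ℕ),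
      (FormalMultilinearSeries.ofScalars ℂ d).coeff n = d n := by
    intro d n
    simp [FormalMultilinearSeries.coeff, FormalMultilinearSeries.ofScalars,
      ContinuousMultilinearMap.mkPiAlgebraFin_apply, List.prod_ofFn]
  have hp : HasFPowerSeriesAt (fun z => Btilde δ z)
      (FormalMultilinearSeries.ofScalars ℂ c) 0 := by
    rw [hasFPowerSeriesAt_iff]
    filter_upwards [Metric.ball_mem_nhds (0 : ℂ) (by norm_num : (0 : ℝ) < 1 / 2)] with z hz
    have hz' : ‖z‖ < 1 / 2 := by simpa [mem_ball, dist_zero_right] using hz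
    rw [zero_add]
    simp only [hcoeff]
    rcases eq_or_ne z 0 with rfl | hz0
    · have hB0 : Btilde δ 0 = 0 := by simp [Btilde]
      rw [hB0]
      have hzero : ∀ n : ℕ, (0 : ℂ) ^ n • c n = 0 := by
        intro n
        cases n with
        | zero => simp [hc_def]
        | succ m => simp
      rw [show (fun n : ℕ => (0 : ℂ) ^ n • c n) = fun _ : ℕ => (0 : ℂ) from funext hzero]
      exact hasSum_zero
    · have h := hlog z hz' hz0
      have h' : HasSum (fun n : ℕ => z ^ (n + 1) • c (n + 1)) (Btilde δ z) := by
        have hfun : (fun n : ℕ => 2 * γ (n + 1) * z ^ (n + 1))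
            = fun n : ℕ => z ^ (n + 1) • c (n + 1) := by
          funext n
          rw [hc_def]
          simp only [Nat.succ_ne_zero, if_false, smul_eq_mul]
          ring
        exact hfun ▸ h
      have h'' : HasSum (fun n : ℕ => z ^ (n + 1) • c (n + 1))
          (Btilde δ z - ∑ i ∈ Finset.range 1, z ^ i • c i) := by
        have : ∑ i ∈ Finset.range 1, z ^ i • c i = 0 := by simp [hc_def]
        rw [this, sub_zero]
        exact h'
      exact (hasSum_nat_add_iff' 1).mp h''
  have hq : HasFPowerSeriesAt (fun z => Btilde δ z)
      (FormalMultilinearSeries.ofScalars ℂ b) 0 := by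
    rw [hasFPowerSeriesAt_iff]
    filter_upwards [Metric.ball_mem_nhds (0 : ℂ) (by norm_num : (0 : ℝ) < 1 / 2)] with z hz
    have hz' : ‖z‖ < 1 / 2 := by simpa [mem_ball, dist_zero_right] using hz
    rw [zero_add]
    simp only [hcoeff]
    have h := hBsum z (by linarith)
    have h' : HasSum (fun n : ℕ => z ^ (n + 1) • b (n + 1)) (Btilde δ z) := by
      have hfun : (fun n : ℕ => ((a n : ℝ) : ℂ) * z ^ (n + 1))
          = fun n : ℕ => z ^ (n + 1) • b (n + 1) := by
        funext n
        rw [hb_def]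
        simp only [Nat.succ_ne_zero, if_false, smul_eq_mul, Nat.add_sub_cancel]
        ring
      exact hfun ▸ h
    have h'' : HasSum (fun n : ℕ => z ^ (n + 1) • b (n + 1))
        (Btilde δ z - ∑ i ∈ Finset.range 1, z ^ i • b i) := by
      have : ∑ i ∈ Finset.range 1, z ^ i • b i = 0 := by simp [hb_def]
      rw [this, sub_zero]
      exact h'
    exact (hasSum_nat_add_iff' 1).mp h''
  have hpq := hp.eq_formalMultilinearSeries hq
  have hγa : ∀ n : ℕ, γ (n + 1) = ((a n / 2 : ℝ) : ℂ) := by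
    intro n
    have h1 : c (n + 1) = b (n + 1) := by
      rw [← hcoeff c (n + 1), ← hcoeff b (n + 1), hpq]
    rw [hc_def, hb_def] at h1
    simp only [Nat.succ_ne_zero, if_false, Nat.add_sub_cancel] at h1
    have : γ (n + 1) = ((a n : ℝ) : ℂ) / 2 := by
      field_simp at h1 ⊢
      linear_combination h1
    rw [this]
    push_cast
    ring
  constructor
  · rintro n hn
    obtain ⟨m, rfl⟩ : ∃ m, n = m + 1 := ⟨n - 1, (Nat.succ_pred_eq_of_pos hn).symm⟩
    rw [hγa m]
    congr 1
    simp only [ha_def, Nat.add_sub_cancel]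
    push_cast
    rw [div_div]
    congr 1
    ring
  · -- the sum identity
    have hterm : ∀ n : ℕ, ‖γ (n + 1)‖ ^ 2
        = Real.sin (((n : ℝ) + 1) * δ) ^ 2 / (4 * ((n : ℝ) + 1) ^ 4 * Real.sin δ ^ 2) := by
      intro n
      rw [hγa n, Complex.norm_real, Real.norm_eq_abs, _root_.sq_abs]
      have hsgn : ((-1 : ℝ) ^ n * Real.sin (((n : ℝ) + 1) * δ)) ^ 2
          = Real.sin (((n : ℝ) + 1) * δ) ^ 2 := by
        rw [mul_pow, ← pow_mul, mul_comm n 2, pow_mul, neg_one_sq, one_pow, one_mul]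
      have hrw : a n / 2 = ((-1 : ℝ) ^ n * Real.sin (((n : ℝ) + 1) * δ))
          / (2 * (((n : ℝ) + 1) ^ 2 * Real.sin δ)) := by
        simp only [ha_def]
        rw [div_div]
        congr 1
        ring
      rw [hrw, div_pow, hsgn]
      congr 1
      ring
    have hA : Complex.exp (-2 * Complex.I * δ)
        = Complex.exp ((((-(2 * δ)) : ℝ)) * Complex.I) := by
      congr 1; push_cast; ring
    have hB2 : Complex.exp (2 * Complex.I * δ)
        = Complex.exp ((((2 * δ) : ℝ)) * Complex.I) := by
      congr 1; push_cast; ring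
    have h2 := hasSum_cos_div (2 * δ)
    have h1 := hasSum_cos_div (-(2 * δ))
    have h1' : HasSum (fun n : ℕ => Real.cos (((n : ℝ) + 1) * (2 * δ)) / ((n : ℝ) + 1) ^ 4)
        ((Li4 (Complex.exp (((-(2 * δ) : ℝ)) * Complex.I))).re) := by
      have hfun : (fun n : ℕ => Real.cos (((n : ℝ) + 1) * (-(2 * δ))) / ((n : ℝ) + 1) ^ 4)
          = fun n : ℕ => Real.cos (((n : ℝ) + 1) * (2 * δ)) / ((n : ℝ) + 1) ^ 4 := by
        funext n; rw [mul_neg, Real.cos_neg]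
      exact hfun ▸ h1
    have hLeq : (Li4 (Complex.exp (((-(2 * δ) : ℝ)) * Complex.I))).re
        = (Li4 (Complex.exp (((2 * δ) : ℝ) * Complex.I))).re := h1'.unique h2
    set L := (Li4 (Complex.exp (((2 * δ) : ℝ) * Complex.I))).re with hL_def
    have htarget : (((1 / (16 * (Real.sin δ : ℂ) ^ 2)) *
        ((Real.pi : ℂ) ^ 4 / 45 -
          Li4 (Complex.exp (-2 * Complex.I * δ)) -
          Li4 (Complex.exp (2 * Complex.I * δ)))).re)
        = (1 / (8 * Real.sin δ ^ 2)) * (Real.pi ^ 4 / 90 - L) := by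
      rw [hA, hB2]
      have hcoe : (1 / (16 * (Real.sin δ : ℂ) ^ 2))
          = (((1 / (16 * Real.sin δ ^ 2) : ℝ)) : ℂ) := by push_cast; ring
      rw [hcoe, Complex.re_ofReal_mul]
      have hre : ((Real.pi : ℂ) ^ 4 / 45 -
          Li4 (Complex.exp (((-(2 * δ) : ℝ)) * Complex.I)) -
          Li4 (Complex.exp (((2 * δ) : ℝ) * Complex.I))).re
          = Real.pi ^ 4 / 45 - L - L := by
        rw [Complex.sub_re, Complex.sub_re, hLeq, ← hL_def]
        congr 1
        have : ((Real.pi : ℂ) ^ 4 / 45) = (((Real.pi ^ 4 / 45 : ℝ)) : ℂ) := by push_cast; ring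
        rw [this, Complex.ofReal_re]
      rw [hre]
      ring
    rw [htarget]
    have hfinal := (hasSum_zeta4'.sub h2).mul_left (1 / (8 * Real.sin δ ^ 2))
    have hfun : (fun n : ℕ => ‖γ (n + 1)‖ ^ 2)
        = fun n : ℕ => 1 / (8 * Real.sin δ ^ 2) *
            (1 / ((n : ℝ) + 1) ^ 4 -
              Real.cos (((n : ℝ) + 1) * (2 * δ)) / ((n : ℝ) + 1) ^ 4) := by
      funext n
      rw [hterm n]
      have hcos : Real.cos (((n : ℝ) + 1) * (2 * δ)) = Real.cos (2 * (((n : ℝ) + 1) * δ)) := by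
        ring_nf
      rw [hcos, Real.sin_sq_eq_half_sub]
      have hne : ((n : ℝ) + 1) ^ 4 ≠ 0 := by positivity
      have hsne : Real.sin δ ≠ 0 := ne_of_gt hs
      field_simp
      ring
    rw [hfun]
    exact hfinal
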